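/- For every finite simple nonempty graph G, the twin-width satisfies tww(G) ≤ 2·mw(G) − 1, where mw(G) is the modular-width of G. Consequently, every graph class of bounded modular-width (equivalently, of bounded cliquewidth) has bounded twin-width. -/

import Mathlib

/-- `P` is a partition of the vertex set: all parts are nonempty and every vertex lies in
exactly one part. -/
def IsPartitionOn {V : Type} (P : Set (Set V)) : Prop :=
  (∀ A ∈ P, A.Nonempty) ∧ ∀ v : V, ∃! A : Set V, A ∈ P ∧ v ∈ A

/-- The pair `(A, B)` is impure: neither complete nor anti-complete, i.e. there is both an
adjacent pair and a non-adjacent pair between `A` and `B`. -/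
def Impure {V : Type} (G : SimpleGraph V) (A B : Set V) : Prop :=
  (∃ a ∈ A, ∃ b ∈ B, G.Adj a b) ∧ (∃ a ∈ A, ∃ b ∈ B, ¬ G.Adj a b)

/-- A contraction sequence of an `n`-vertex graph `G` (indexed by the number of merges
performed so far, from `0` up to `n − 1`): it starts with the partition into singletons,
ends with the one-part partition, and each partition is obtained from the previous one by
merging two parts. -/
structure ContractionSeq {V : Type} (G : SimpleGraph V) (n : ℕ) where
  part : ℕ → Set (Set V)
  partition : ∀ j < n, IsPartitionOn (part j)
  first : part 0 = {A | ∃ v : V, A = {v}}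
  last : part (n - 1) = {Set.univ}
  merge : ∀ j, j + 1 < n → ∃ B C : Set V, B ∈ part j ∧ C ∈ part j ∧ B ≠ C ∧
    part (j + 1) = insert (B ∪ C) (part j \ {B, C})

/-- The width of a contraction sequence: the maximum degree of a part in the error graphs,
i.e. the maximum over all partitions of the sequence and all parts `A` of the number of
other parts forming an impure pair with `A`. -/
noncomputable def ContractionSeq.width {V : Type} {G : SimpleGraph V} {n : ℕ}
    (S : ContractionSeq G n) : ℕ :=
  ⨆ j : Fin n, ⨆ A : ↥(S.part j), Set.ncard {B | B ∈ S.part j ∧ B ≠ ↑A ∧ Impure G ↑A B}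

/-- The twin-width of `G`: the minimum width of a contraction sequence of `G`. -/
noncomputable def twinWidth {V : Type} (G : SimpleGraph V) : ℕ :=
  sInf {d | ∃ S : ContractionSeq G (Nat.card V), S.width = d}

/-- A laminar decomposition of the vertex set `V` (a rooted binary tree whose leaves are the
vertices, encoded by the laminar family of its sets `Leaves(x)`): it contains `V` (the root)
and all singletons (the leaves), its members are nonempty and pairwise nested or disjoint,
and every non-singleton member splits into exactly two disjoint proper members (its two
children). -/
structure LaminarDecomp (V : Type) where
  mem : Set (Set V)
  univ_mem : Set.univ ∈ mem
  singleton_mem : ∀ v : V, {v} ∈ mem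
  nonempty : ∀ A ∈ mem, A.Nonempty
  laminar : ∀ A ∈ mem, ∀ B ∈ mem, A ⊆ B ∨ B ⊆ A ∨ A ∩ B = ∅
  binary : ∀ A ∈ mem, (¬ ∃ v : V, A = {v}) →
    ∃ B ∈ mem, ∃ C ∈ mem, B ≠ A ∧ C ≠ A ∧ B ∪ C = A ∧ B ∩ C = ∅

/-- The diversity of a vertex subset `A` of `G`: the number of distinct sets `N(v) \ A`
for `v ∈ A`. -/
noncomputable def diversity {V : Type} (G : SimpleGraph V) (A : Set V) : ℕ :=
  Set.ncard ((fun v => {w | G.Adj v w ∧ w ∉ A}) '' A)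

/-- The modular-width of `G`: the minimum over laminar decompositions `T` of the maximum
diversity of a member of `T`. -/
noncomputable def modularWidth {V : Type} (G : SimpleGraph V) : ℕ :=
  sInf {k | ∃ T : LaminarDecomp V, ∀ A ∈ T.mem, diversity G A ≤ k}

open Set

namespace TWW

variable {V : Type} (G : SimpleGraph V)

/-- outside-neighborhood -/
def nC (M : Set V) (v : V) : Set V := {w | G.Adj v w ∧ w ∉ M}

/-- equivalence class of `v` in `M` w.r.t. outside neighborhoods -/
def cls (M : Set V) (v : V) : Set V := {u ∈ M | nC G M u = nC G M v}

/-- partition of M into classes -/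
def clsPart (M : Set V) : Set (Set V) := (fun v => cls G M v) '' M

/-- partition of M into singletons -/
def sngl (M : Set V) : Set (Set V) := (fun v => ({v} : Set V)) '' M

/-- uniformity of `Q` outside `m` -/
def Unif (m Q : Set V) : Prop :=
  ∀ p ∈ Q, ∀ q ∈ Q, ∀ w, w ∉ m → (G.Adj p w ↔ G.Adj q w)

/-- partition of the subset M -/
def PartOn (M : Set V) (π : Set (Set V)) : Prop :=
  (∀ A ∈ π, A.Nonempty ∧ A ⊆ M) ∧ ∀ v ∈ M, ∃! A : Set V, A ∈ π ∧ v ∈ A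

/-- single merge step -/
def Step (π π' : Set (Set V)) : Prop :=
  ∃ B C : Set V, B ∈ π ∧ C ∈ π ∧ B ≠ C ∧ π' = insert (B ∪ C) (π \ {B, C})

variable (T : LaminarDecomp V) (d : ℕ)

/-- a "done region" m for partition π -/
def Reg (π : Set (Set V)) (m : Set V) : Prop :=
  m ∈ T.mem ∧ (∀ Q ∈ π, Q ⊆ m ∨ Q ∩ m = ∅) ∧ (∀ Q ∈ π, Q ⊆ m → Unif G m Q) ∧
    {Q ∈ π | Q ⊆ m}.ncard ≤ d

/-- the main invariant relative to ambient member M -/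
def Inv (M : Set V) (π : Set (Set V)) : Prop :=
  ∃ W, W ∈ T.mem ∧ W ⊆ M ∧ (∀ Q ∈ π, Q ⊆ W ∨ Q ∩ W = ∅) ∧
    (∀ Q ∈ π, Q ⊆ W → Unif G W Q) ∧ {Q ∈ π | Q ⊆ W}.ncard ≤ 2 * d ∧
    ∀ Q ∈ π, Q ∩ W = ∅ → ∃ m, Reg G T d π m ∧ Q ⊆ m ∧ m ⊆ M ∧ m ∩ W = ∅

/-- reachability by merge steps, all partitions satisfying P -/
inductive ReachI (P : Set (Set V) → Prop) : Set (Set V) → Set (Set V) → Prop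
  | refl {π} : P π → ReachI P π π
  | head {π ρ σ} : P π → Step π ρ → ReachI P ρ σ → ReachI P π σ

end TWW
namespace TWW
open Set
variable {V : Type} {G : SimpleGraph V}

lemma unif_subsingleton {m Q : Set V} (h : Q.Subsingleton) : Unif G m Q := by
  intro p hp q hq w _
  rw [h hp hq]

lemma cls_self {M : Set V} {v : V} (hv : v ∈ M) : v ∈ cls G M v := ⟨hv, rfl⟩

lemma cls_eq_of_mem {M : Set V} {u v : V} (h : u ∈ cls G M v) :
    cls G M u = cls G M v := by
  ext x; exact ⟨fun hx => ⟨hx.1, hx.2.trans h.2⟩, fun hx => ⟨hx.1, hx.2.trans h.2.symm⟩⟩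

lemma unif_of_subset_cls {M Q : Set V} {v : V} (h : Q ⊆ cls G M v) : Unif G M Q := by
  intro p hp q hq w hw
  have hp' := (h hp).2; have hq' := (h hq).2
  have : w ∈ nC G M p ↔ w ∈ nC G M q := by rw [hp', hq']
  simp only [nC, mem_setOf_eq] at this
  constructor
  · intro ha; exact ((this.1 ⟨ha, hw⟩)).1
  · intro ha; exact ((this.2 ⟨ha, hw⟩)).1

lemma partOn_sngl {M : Set V} : PartOn M (sngl M) := by
  constructor
  · rintro A ⟨v, hv, rfl⟩
    exact ⟨singleton_nonempty v, by simpa using hv⟩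
  · intro v hv
    refine ⟨{v}, ⟨⟨v, hv, rfl⟩, rfl⟩, ?_⟩
    rintro A ⟨⟨u, hu, rfl⟩, hvA⟩
    simp_all

lemma partOn_clsPart {M : Set V} : PartOn M (clsPart G M) := by
  constructor
  · rintro A ⟨v, hv, rfl⟩
    exact ⟨⟨v, cls_self hv⟩, fun u hu => hu.1⟩
  · intro v hv
    refine ⟨cls G M v, ⟨⟨v, hv, rfl⟩, cls_self hv⟩, ?_⟩
    rintro A ⟨⟨u, hu, rfl⟩, hvA⟩
    exact (cls_eq_of_mem hvA).symm

lemma ncard_image_le_image {α β γ : Type*} [Finite γ] [Nonempty β] {s : Set α}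
    (f : α → β) (g : α → γ) (h : ∀ x ∈ s, ∀ y ∈ s, g x = g y → f x = f y) :
    (f '' s).ncard ≤ (g '' s).ncard := by
  classical
  set F : γ → β := fun c => if hc : ∃ x, x ∈ s ∧ g x = c then f hc.choose else Classical.arbitrary β with hF
  have key : f '' s = F '' (g '' s) := by
    ext b; constructor
    · rintro ⟨x, hx, rfl⟩
      refine ⟨g x, ⟨x, hx, rfl⟩, ?_⟩
      have hc : ∃ y, y ∈ s ∧ g y = g x := ⟨x, hx, rfl⟩
      simp only [hF, dif_pos hc]
      exact h _ hc.choose_spec.1 _ hx hc.choose_spec.2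
    · rintro ⟨c, ⟨x, hx, rfl⟩, rfl⟩
      have hc : ∃ y, y ∈ s ∧ g y = g x := ⟨x, hx, rfl⟩
      simp only [hF, dif_pos hc]
      exact ⟨hc.choose, hc.choose_spec.1, rfl⟩
  rw [key]
  exact Set.ncard_image_le (Set.toFinite _)

lemma ncard_clsPart_le [Finite V] {M : Set V} : (clsPart G M).ncard ≤ diversity G M := by
  have : diversity G M = ((fun v => nC G M v) '' M).ncard := rfl
  rw [this]
  refine ncard_image_le_image _ _ ?_
  intro x hx y hy hg
  ext u
  simp only [cls, mem_setOf_eq, hg]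

lemma partOn_disjoint {M : Set V} {π : Set (Set V)} (h : PartOn M π) {A B : Set V}
    (hA : A ∈ π) (hB : B ∈ π) (hne : A ≠ B) : A ∩ B = ∅ := by
  by_contra hc
  obtain ⟨v, hvA, hvB⟩ := Set.nonempty_iff_ne_empty.2 hc
  obtain ⟨C, _, hC⟩ := h.2 v ((h.1 A hA).2 hvA)
  exact hne ((hC A ⟨hA, hvA⟩).trans (hC B ⟨hB, hvB⟩).symm)

lemma partOn_merge {M : Set V} {π : Set (Set V)} (h : PartOn M π) {B C : Set V}
    (hB : B ∈ π) (hC : C ∈ π) (hne : B ≠ C) :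
    PartOn M (insert (B ∪ C) (π \ {B, C})) := by
  constructor
  · rintro A (rfl | ⟨hA, -⟩)
    · exact ⟨((h.1 B hB).1).mono subset_union_left,
        union_subset (h.1 B hB).2 (h.1 C hC).2⟩
    · exact h.1 A hA
  · intro v hv
    obtain ⟨A, ⟨hA, hvA⟩, hAu⟩ := h.2 v hv
    by_cases hABC : A = B ∨ A = C
    · refine ⟨B ∪ C, ⟨mem_insert _ _, ?_⟩, ?_⟩
      · rcases hABC with rfl | rfl
        · exact Or.inl hvA
        · exact Or.inr hvA
      · rintro D ⟨(rfl | ⟨hD, hD2⟩), hvD⟩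
        · rfl
        · exfalso; rcases hvD with hvD
          have := hAu D ⟨hD, hvD⟩
          rcases hABC with rfl | rfl <;> simp_all [Set.mem_insert_iff]
    · push_neg at hABC
      refine ⟨A, ⟨Set.mem_insert_of_mem _ ⟨hA, by simp [hABC.1, hABC.2]⟩, hvA⟩, ?_⟩
      rintro D ⟨(rfl | ⟨hD, -⟩), hvD⟩
      · exfalso
        rcases hvD with hvB | hvC
        · exact hABC.1 (hAu B ⟨hB, hvB⟩).symm
        · exact hABC.2 (hAu C ⟨hC, hvC⟩).symm
      · exact hAu D ⟨hD, hvD⟩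

lemma step_ncard {M : Set V} {π π' : Set (Set V)} [Finite V] (h : PartOn M π)
    (hs : Step π π') : π'.ncard + 1 = π.ncard := by
  obtain ⟨B, C, hB, hC, hne, rfl⟩ := hs
  have hBC : B ∪ C ∉ π \ {B, C} := by
    rintro ⟨hm, hn⟩
    simp only [Set.mem_insert_iff, Set.mem_singleton_iff, not_or] at hn
    obtain ⟨v, hv⟩ := (h.1 B hB).1
    obtain ⟨A, -, hAu⟩ := h.2 v ((h.1 B hB).2 hv)
    have : B = B ∪ C := (hAu B ⟨hB, hv⟩).trans (hAu (B ∪ C) ⟨hm, Or.inl hv⟩).symm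
    exact hn.1 this.symm
  rw [Set.ncard_insert_of_notMem hBC (Set.toFinite _)]
  have hsub : {B, C} ⊆ π := by rintro X (rfl | rfl); exacts [hB, by simpa using hC]
  rw [Set.ncard_diff hsub (Set.toFinite _), Set.ncard_pair hne]
  have h2 : 2 ≤ π.ncard := by
    rw [← Set.ncard_pair hne]
    exact Set.ncard_le_ncard hsub (Set.toFinite _)
  omega

lemma partOn_union {B C : Set V} {ρ σ : Set (Set V)} (hB : PartOn B ρ) (hC : PartOn C σ)
    (hd : B ∩ C = ∅) : PartOn (B ∪ C) (ρ ∪ σ) := by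
  have hdis : ∀ v, v ∈ B → v ∈ C → False := fun v h1 h2 =>
    Set.eq_empty_iff_forall_notMem.1 hd v ⟨h1, h2⟩
  constructor
  · rintro A (hA | hA)
    · exact ⟨(hB.1 A hA).1, (hB.1 A hA).2.trans subset_union_left⟩
    · exact ⟨(hC.1 A hA).1, (hC.1 A hA).2.trans subset_union_right⟩
  · rintro v (hv | hv)
    · obtain ⟨A, ⟨hA, hvA⟩, hAu⟩ := hB.2 v hv
      refine ⟨A, ⟨Or.inl hA, hvA⟩, ?_⟩
      rintro D ⟨(hD | hD), hvD⟩
      · exact hAu D ⟨hD, hvD⟩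
      · exact absurd ((hC.1 D hD).2 hvD) (fun hc => hdis v hv hc)
    · obtain ⟨A, ⟨hA, hvA⟩, hAu⟩ := hC.2 v hv
      refine ⟨A, ⟨Or.inr hA, hvA⟩, ?_⟩
      rintro D ⟨(hD | hD), hvD⟩
      · exact absurd ((hB.1 D hD).2 hvD) (fun hc => hdis v hc hv)
      · exact hAu D ⟨hD, hvD⟩

end TWW

namespace TWW
open Set
variable {V : Type} {G : SimpleGraph V} {T : LaminarDecomp V} {d : ℕ}

lemma ReachI.mono {P P' : Set (Set V) → Prop} {π σ : Set (Set V)}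
    (h : ∀ ρ, P ρ → P' ρ) : ReachI P π σ → ReachI P' π σ := by
  intro hr
  induction hr with
  | refl hp => exact .refl (h _ hp)
  | head hp hs _ ih => exact .head (h _ hp) hs ih

lemma ReachI.trans {P : Set (Set V) → Prop} {π ρ σ : Set (Set V)}
    (h1 : ReachI P π ρ) (h2 : ReachI P ρ σ) : ReachI P π σ := by
  induction h1 with
  | refl _ => exact h2
  | head hp hs _ ih => exact .head hp hs (ih h2)

/-- lift a reach inside region `D` by adding fixed external parts `E` -/
lemma ReachI.lift {P P' : Set (Set V) → Prop} {π σ : Set (Set V)} (E : Set (Set V))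
    (D : Set V) (hP : ∀ ρ, P ρ → ∀ Q ∈ ρ, Q.Nonempty ∧ Q ⊆ D)
    (hE : ∀ e ∈ E, e ∩ D = ∅) (h' : ∀ ρ, P ρ → P' (ρ ∪ E)) :
    ReachI P π σ → ReachI P' (π ∪ E) (σ ∪ E) := by
  intro hr
  induction hr with
  | refl hp => exact .refl (h' _ hp)
  | @head π ρ σ hp hs _ ih =>
    refine .head (h' _ hp) ?_ ih
    obtain ⟨B, C, hB, hC, hne, rfl⟩ := hs
    refine ⟨B, C, Or.inl hB, Or.inl hC, hne, ?_⟩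
    have hBE : B ∉ E := fun hBE => by
      obtain ⟨v, hv⟩ := (hP _ hp B hB).1
      exact Set.eq_empty_iff_forall_notMem.1 (hE B hBE) v ⟨hv, (hP _ hp B hB).2 hv⟩
    have hCE : C ∉ E := fun hCE => by
      obtain ⟨v, hv⟩ := (hP _ hp C hC).1
      exact Set.eq_empty_iff_forall_notMem.1 (hE C hCE) v ⟨hv, (hP _ hp C hC).2 hv⟩
    have : (π ∪ E) \ {B, C} = (π \ {B, C}) ∪ E := by
      rw [Set.union_diff_distrib]
      congr 1
      ext X
      simp only [Set.mem_diff, Set.mem_insert_iff, Set.mem_singleton_iff, and_iff_left_iff_imp]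
      rintro hX1 (rfl | rfl)
      exacts [hBE hX1, hCE hX1]
    rw [this, Set.insert_union]

/-- pure pair from crossed uniformity -/
lemma pure_of {mA mB A B : Set V} (hA : Unif G mA A) (hB : Unif G mB B)
    (hAB : A ∩ mB = ∅) (hBA : B ∩ mA = ∅) : ¬ Impure G A B := by
  rintro ⟨⟨a, ha, b, hb, hadj⟩, ⟨a', ha', b', hb', hnadj⟩⟩
  have hb_nA : b ∉ mA := fun hc => Set.eq_empty_iff_forall_notMem.1 hBA b ⟨hb, hc⟩
  have ha'_nB : a' ∉ mB := fun hc => Set.eq_empty_iff_forall_notMem.1 hAB a' ⟨ha', hc⟩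
  have h1 : G.Adj a b ↔ G.Adj a' b := hA a ha a' ha' b hb_nA
  have h2 : G.Adj b b' ↔ G.Adj b b' := Iff.rfl
  have h3 : G.Adj a' b ↔ G.Adj a' b' := by
    have := hB b hb b' hb' a' ha'_nB
    constructor
    · intro h; exact (this.1 h.symm).symm
    · intro h; exact (this.2 h.symm).symm
  exact hnadj (h3.1 (h1.1 hadj))

end TWW

namespace TWW
open Set
variable {V : Type} {G : SimpleGraph V} {T : LaminarDecomp V} {d : ℕ}

lemma degree_bound [Finite V] (hd : 1 ≤ d) {π : Set (Set V)} (hπ : PartOn Set.univ π)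
    (hI : Inv G T d Set.univ π) {A : Set V} (hA : A ∈ π) :
    {B | B ∈ π ∧ B ≠ A ∧ Impure G A B}.ncard ≤ 2 * d - 1 := by
  obtain ⟨W, hWmem, -, hdich, hunif, hcount, hreg⟩ := hI
  have hAne : A.Nonempty := (hπ.1 A hA).1
  rcases hdich A hA with hAW | hAW
  · -- A inside W
    have hsub : {B | B ∈ π ∧ B ≠ A ∧ Impure G A B} ⊆ {Q ∈ π | Q ⊆ W} \ {A} := by
      rintro B ⟨hBπ, hBne, hImp⟩
      rcases hdich B hBπ with hBW | hBW
      · exact ⟨⟨hBπ, hBW⟩, hBne⟩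
      · exfalso
        obtain ⟨m, hReg, hBm, -, hmW⟩ := hreg B hBπ hBW
        refine pure_of (hunif A hA hAW) (hReg.2.2.1 B hBπ hBm) ?_ hBW hImp
        apply Set.eq_empty_iff_forall_notMem.2
        rintro x ⟨hx1, hx2⟩
        exact Set.eq_empty_iff_forall_notMem.1 hmW x ⟨hx2, hAW hx1⟩
    calc {B | B ∈ π ∧ B ≠ A ∧ Impure G A B}.ncard
        ≤ ({Q ∈ π | Q ⊆ W} \ {A}).ncard := Set.ncard_le_ncard hsub (Set.toFinite _)
      _ = {Q ∈ π | Q ⊆ W}.ncard - 1 := Set.ncard_diff_singleton_of_mem ⟨hA, hAW⟩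
      _ ≤ 2 * d - 1 := Nat.sub_le_sub_right hcount 1
  · -- A outside W, in a done region
    obtain ⟨mA, hRegA, hAmA, -, hmAW⟩ := hreg A hA hAW
    set N : Set (Set V) := {m | Reg G T d π m ∧ m ∩ W = ∅ ∧ A ⊆ m} with hN
    have hmAN : mA ∈ N := ⟨hRegA, hmAW, hAmA⟩
    obtain ⟨a, ha⟩ := hAne
    have hnest : ∀ m ∈ N, ∀ m' ∈ N, m ⊆ m' ∨ m' ⊆ m := by
      intro m hm m' hm'
      rcases T.laminar m hm.1.1 m' hm'.1.1 with h | h | h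
      · exact Or.inl h
      · exact Or.inr h
      · exact absurd (Set.eq_empty_iff_forall_notMem.1 h a ⟨hm.2.2 ha, hm'.2.2 ha⟩) (fun _ => by trivial)
    obtain ⟨mh, hmhN, hmax⟩ := Set.Finite.exists_maximalFor id N (Set.toFinite _) ⟨mA, hmAN⟩
    have hle : ∀ m ∈ N, m ⊆ mh := by
      intro m hm
      rcases hnest m hm mh hmhN with h | h
      · exact h
      · exact hmax hm h
    have hsub : {B | B ∈ π ∧ B ≠ A ∧ Impure G A B} ⊆ {Q ∈ π | Q ⊆ mh} \ {A} := by
      rintro B ⟨hBπ, hBne, hImp⟩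
      refine ⟨⟨hBπ, ?_⟩, hBne⟩
      have hBW : B ∩ W = ∅ := by
        rcases hdich B hBπ with hBW | hBW
        · exfalso
          refine pure_of (hRegA.2.2.1 A hA hAmA) (hunif B hBπ hBW) hAW ?_ hImp
          apply Set.eq_empty_iff_forall_notMem.2
          rintro x ⟨hx1, hx2⟩
          exact Set.eq_empty_iff_forall_notMem.1 hmAW x ⟨hx2, hBW hx1⟩
        · exact hBW
      obtain ⟨mB, hRegB, hBmB, -, hmBW⟩ := hreg B hBπ hBW
      rcases hRegA.2.1 B hBπ with hBmA | hBmA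
      · exact hBmA.trans (hle mA hmAN)
      · rcases hRegB.2.1 A hA with hAmB | hAmB
        · exact hBmB.trans (hle mB ⟨hRegB, hmBW, hAmB⟩)
        · exfalso
          exact pure_of (hRegA.2.2.1 A hA hAmA) (hRegB.2.2.1 B hBπ hBmB) hAmB hBmA hImp
    calc {B | B ∈ π ∧ B ≠ A ∧ Impure G A B}.ncard
        ≤ ({Q ∈ π | Q ⊆ mh} \ {A}).ncard := Set.ncard_le_ncard hsub (Set.toFinite _)
      _ = {Q ∈ π | Q ⊆ mh}.ncard - 1 :=
          Set.ncard_diff_singleton_of_mem ⟨hA, hAmA.trans (hle mA hmAN)⟩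
      _ ≤ d - 1 := Nat.sub_le_sub_right hmhN.1.2.2.2 1
      _ ≤ 2 * d - 1 := Nat.sub_le_sub_right (by omega) 1

end TWW

namespace TWW
open Set
variable {V : Type} {G : SimpleGraph V} {T : LaminarDecomp V} {d : ℕ}

lemma cls_mono {B M : Set V} (h : B ⊆ M) {v : V} : cls G B v ⊆ cls G M v := by
  rintro u ⟨huB, he⟩
  refine ⟨h huB, ?_⟩
  ext w
  simp only [nC, mem_setOf_eq]
  constructor
  · rintro ⟨ha, hw⟩
    have : w ∈ nC G B u := ⟨ha, fun hc => hw (h hc)⟩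
    rw [he] at this
    exact ⟨this.1, hw⟩
  · rintro ⟨ha, hw⟩
    have : w ∈ nC G B v := ⟨ha, fun hc => hw (h hc)⟩
    rw [← he] at this
    exact ⟨this.1, hw⟩

lemma sep_union_eq_left {ρ E : Set (Set V)} {m : Set V} (h : ∀ e ∈ E, ¬ e ⊆ m) :
    {Q ∈ ρ ∪ E | Q ⊆ m} = {Q ∈ ρ | Q ⊆ m} := by
  ext Q
  constructor
  · rintro ⟨(hQ | hQ), hm⟩
    · exact ⟨hQ, hm⟩
    · exact absurd hm (h Q hQ)
  · rintro ⟨hQ, hm⟩; exact ⟨Or.inl hQ, hm⟩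

lemma sep_union_eq_right {ρ E : Set (Set V)} {m : Set V} (h : ∀ e ∈ ρ, ¬ e ⊆ m) :
    {Q ∈ ρ ∪ E | Q ⊆ m} = {Q ∈ E | Q ⊆ m} := by
  ext Q
  constructor
  · rintro ⟨(hQ | hQ), hm⟩
    · exact absurd hm (h Q hQ)
    · exact ⟨hQ, hm⟩
  · rintro ⟨hQ, hm⟩; exact ⟨Or.inr hQ, hm⟩

lemma not_subset_of_disj {e m D : Set V} (hne : e.Nonempty) (hd : e ∩ D = ∅)
    (hm : m ⊆ D) : ¬ e ⊆ m := by
  intro hc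
  obtain ⟨x, hx⟩ := hne
  exact Set.eq_empty_iff_forall_notMem.1 hd x ⟨hx, hm (hc hx)⟩

lemma exists_mergeable {M : Set V} {ρ : Set (Set V)} (hπ : PartOn M ρ)
    (hcb : ∀ Q ∈ ρ, ∃ v ∈ M, Q ⊆ cls G M v) (hne : ρ ≠ clsPart G M) :
    ∃ Q ∈ ρ, ∃ Q' ∈ ρ, Q ≠ Q' ∧ ∃ v ∈ M, Q ⊆ cls G M v ∧ Q' ⊆ cls G M v := by
  by_contra hcon
  push_neg at hcon
  apply hne
  have hpair : ∀ Q ∈ ρ, ∀ Q' ∈ ρ, ∀ v ∈ M, Q ⊆ cls G M v → Q' ⊆ cls G M v → Q = Q' := by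
    intro Q hQ Q' hQ' v hv h1 h2
    by_contra hneq
    exact absurd h2 (hcon Q hQ Q' hQ' hneq v hv h1)
  -- each class is a part
  have hclsmem : ∀ v ∈ M, cls G M v ∈ ρ := by
    intro v hv
    obtain ⟨Qv, ⟨hQv, hvQv⟩, -⟩ := hπ.2 v hv
    obtain ⟨u, hu, hQu⟩ := hcb Qv hQv
    have hQv' : Qv ⊆ cls G M v := by
      rw [cls_eq_of_mem (hQu hvQv)]; exact hQu
    suffices hss : cls G M v ⊆ Qv by
      have : cls G M v = Qv := Set.Subset.antisymm hss hQv'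
      rw [this]; exact hQv
    intro w hw
    have hwM : w ∈ M := hw.1
    obtain ⟨Qw, ⟨hQw, hwQw⟩, -⟩ := hπ.2 w hwM
    obtain ⟨u', hu', hQu'⟩ := hcb Qw hQw
    have hQw' : Qw ⊆ cls G M v := by
      have h1 := cls_eq_of_mem (hQu' hwQw)  -- cls w = cls u'
      have h2 := cls_eq_of_mem hw           -- cls w = cls v
      rw [← h1, h2] at hQu'
      exact hQu'
    have := hpair Qv hQv Qw hQw v hv hQv' hQw'
    rw [this]; exact hwQw
  ext Q
  constructor
  · intro hQ
    obtain ⟨v, hv, hQv⟩ := hcb Q hQ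
    have := hpair Q hQ (cls G M v) (hclsmem v hv) v hv hQv subset_rfl
    rw [this]
    exact ⟨v, hv, rfl⟩
  · rintro ⟨v, hv, rfl⟩
    exact hclsmem v hv

lemma mergeDown [Finite V] {M : Set V} :
    ∀ n (ρ : Set (Set V)), ρ.ncard ≤ n → PartOn M ρ →
      (∀ Q ∈ ρ, ∃ v ∈ M, Q ⊆ cls G M v) → ρ.ncard ≤ 2 * d →
    ReachI (fun σ => PartOn M σ ∧ (∀ Q ∈ σ, ∃ v ∈ M, Q ⊆ cls G M v) ∧ σ.ncard ≤ 2 * d)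
      ρ (clsPart G M) := by
  intro n
  induction n with
  | zero =>
    intro ρ hn hπ hcb hcard
    by_cases he : ρ = clsPart G M
    · rw [← he]; exact .refl ⟨hπ, hcb, hcard⟩
    · obtain ⟨Q, hQ, Q', hQ', hne, -⟩ := exists_mergeable hπ hcb he
      exfalso
      have : 2 ≤ ρ.ncard := by
        rw [← Set.ncard_pair hne]
        exact Set.ncard_le_ncard (by rintro X (rfl | rfl) <;> simp_all) (Set.toFinite _)
      omega
  | succ n ih =>
    intro ρ hn hπ hcb hcard
    by_cases he : ρ = clsPart G M
    · rw [← he]; exact .refl ⟨hπ, hcb, hcard⟩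
    · obtain ⟨Q, hQ, Q', hQ', hne, v, hv, h1, h2⟩ := exists_mergeable hπ hcb he
      set ρ' := insert (Q ∪ Q') (ρ \ {Q, Q'}) with hρ'
      have hstep : Step ρ ρ' := ⟨Q, Q', hQ, hQ', hne, rfl⟩
      have hπ' : PartOn M ρ' := partOn_merge hπ hQ hQ' hne
      have hcb' : ∀ R ∈ ρ', ∃ u ∈ M, R ⊆ cls G M u := by
        rintro R (rfl | ⟨hR, -⟩)
        · exact ⟨v, hv, union_subset h1 h2⟩
        · exact hcb R hR
      have hcard' : ρ'.ncard + 1 = ρ.ncard := step_ncard hπ hstep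
      exact .head ⟨hπ, hcb, hcard⟩ hstep
        (ih ρ' (by omega) hπ' hcb' (by omega))

end TWW

namespace TWW
open Set
variable {V : Type} {G : SimpleGraph V} {T : LaminarDecomp V} {d : ℕ}

lemma inv_lift {M B : Set V} {ρ E : Set (Set V)}
    (hInv : Inv G T d B ρ)
    (hρ : ∀ Q ∈ ρ, Q.Nonempty ∧ Q ⊆ B)
    (hBM : B ⊆ M)
    (hEne : ∀ e ∈ E, e.Nonempty)
    (hEd : ∀ e ∈ E, e ∩ B = ∅)
    (hEreg : ∀ e ∈ E, ∃ m, m ∈ T.mem ∧ m ⊆ M ∧ m ∩ B = ∅ ∧ e ⊆ m ∧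
      (∀ e' ∈ ρ ∪ E, e' ⊆ m ∨ e' ∩ m = ∅) ∧ (∀ e' ∈ ρ ∪ E, e' ⊆ m → Unif G m e') ∧
      {Q ∈ ρ ∪ E | Q ⊆ m}.ncard ≤ d) :
    Inv G T d M (ρ ∪ E) := by
  obtain ⟨W, hWmem, hWB, hdich, hunif, hcount, hreg⟩ := hInv
  have notsubW : ∀ e ∈ E, ¬ e ⊆ W := fun e he =>
    not_subset_of_disj (hEne e he) (hEd e he) hWB
  refine ⟨W, hWmem, hWB.trans hBM, ?_, ?_, ?_, ?_⟩
  · rintro Q (hQ | hQ)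
    · exact hdich Q hQ
    · refine Or.inr (Set.eq_empty_iff_forall_notMem.2 ?_)
      rintro x ⟨hx1, hx2⟩
      exact Set.eq_empty_iff_forall_notMem.1 (hEd Q hQ) x ⟨hx1, hWB hx2⟩
  · rintro Q (hQ | hQ) hQW
    · exact hunif Q hQ hQW
    · exact absurd hQW (notsubW Q hQ)
  · rw [sep_union_eq_left notsubW]; exact hcount
  · rintro Q (hQ | hQ) hQW
    · obtain ⟨m, ⟨hm_mem, hm_dich, hm_unif, hm_count⟩, hQm, hmB, hmW⟩ := hreg Q hQ hQW
      have notsubm : ∀ e ∈ E, ¬ e ⊆ m := fun e he =>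
        not_subset_of_disj (hEne e he) (hEd e he) hmB
      refine ⟨m, ⟨hm_mem, ?_, ?_, ?_⟩, hQm, hmB.trans hBM, hmW⟩
      · rintro e' (he' | he')
        · exact hm_dich e' he'
        · refine Or.inr (Set.eq_empty_iff_forall_notMem.2 ?_)
          rintro x ⟨hx1, hx2⟩
          exact Set.eq_empty_iff_forall_notMem.1 (hEd e' he') x ⟨hx1, hmB hx2⟩
      · rintro e' (he' | he') hsub
        · exact hm_unif e' he' hsub
        · exact absurd hsub (notsubm e' he')
      · rw [sep_union_eq_left notsubm]; exact hm_count
    · obtain ⟨m, hm_mem, hmM, hmB, hQm, hm_dich, hm_unif, hm_count⟩ := hEreg Q hQ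
      refine ⟨m, ⟨hm_mem, hm_dich, hm_unif, hm_count⟩, hQm, hmM, ?_⟩
      apply Set.eq_empty_iff_forall_notMem.2
      rintro x ⟨hx1, hx2⟩
      exact Set.eq_empty_iff_forall_notMem.1 hmB x ⟨hx1, hWB hx2⟩

lemma sngl_singleton {v : V} : sngl ({v} : Set V) = {({v} : Set V)} := by
  simp [sngl]

lemma clsPart_singleton {v : V} : clsPart G ({v} : Set V) = {({v} : Set V)} := by
  have : cls G {v} v = {v} := by
    ext u
    constructor
    · exact fun h => h.1
    · rintro rfl; exact cls_self rfl
  simp [clsPart, this]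

lemma inv_of_classbdd [Finite V] {M : Set V} (hM : M ∈ T.mem) {σ : Set (Set V)}
    (hπ : PartOn M σ) (hcb : ∀ Q ∈ σ, ∃ v ∈ M, Q ⊆ cls G M v)
    (hcard : σ.ncard ≤ 2 * d) : Inv G T d M σ := by
  refine ⟨M, hM, subset_rfl, fun Q hQ => Or.inl (hπ.1 Q hQ).2, ?_, ?_, ?_⟩
  · intro Q hQ _
    obtain ⟨v, -, hv⟩ := hcb Q hQ
    exact unif_of_subset_cls hv
  · have : {Q ∈ σ | Q ⊆ M} = σ := by
      ext Q; exact ⟨fun h => h.1, fun h => ⟨h, (hπ.1 Q h).2⟩⟩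
    rw [this]; exact hcard
  · intro Q hQ hQM
    exfalso
    obtain ⟨x, hx⟩ := (hπ.1 Q hQ).1
    exact Set.eq_empty_iff_forall_notMem.1 hQM x ⟨hx, (hπ.1 Q hQ).2 hx⟩

lemma build [Finite V] (hd : 1 ≤ d) (hT : ∀ A ∈ T.mem, diversity G A ≤ d) :
    ∀ n, ∀ M ∈ T.mem, M.ncard ≤ n →
    ReachI (fun ρ => PartOn M ρ ∧ Inv G T d M ρ) (sngl M) (clsPart G M) := by
  intro n
  induction n with
  | zero =>
    intro M hM hn
    exfalso
    obtain ⟨x, hx⟩ := T.nonempty M hM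
    have := Set.ncard_pos (Set.toFinite M) |>.2 ⟨x, hx⟩
    omega
  | succ n ih =>
    intro M hM hn
    by_cases hsing : ∃ v : V, M = {v}
    · obtain ⟨v, rfl⟩ := hsing
      rw [sngl_singleton, clsPart_singleton]
      refine .refl ⟨by rw [← sngl_singleton]; exact partOn_sngl, ?_⟩
      refine ⟨{v}, T.singleton_mem v, subset_rfl, ?_, ?_, ?_, ?_⟩
      · rintro Q rfl; exact Or.inl subset_rfl
      · rintro Q rfl _; exact unif_subsingleton (by simp)
      · have : {Q ∈ ({({v} : Set V)} : Set (Set V)) | Q ⊆ {v}} = {({v} : Set V)} := by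
          ext Q
          constructor
          · exact fun h => h.1
          · rintro rfl; exact ⟨rfl, subset_rfl⟩
        rw [this, Set.ncard_singleton]
        omega
      · rintro Q rfl hQ
        simp at hQ
    · obtain ⟨B, hB, C, hC, hBne, hCne, hBC, hdisj⟩ := T.binary M hM hsing
      have hBM : B ⊆ M := hBC ▸ subset_union_left
      have hCM : C ⊆ M := hBC ▸ subset_union_right
      have hBlt : B.ncard ≤ n := by
        have : B.ncard < M.ncard :=
          Set.ncard_lt_ncard (ssubset_of_subset_of_ne hBM hBne) (Set.toFinite _)
        omega
      have hClt : C.ncard ≤ n := by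
        have : C.ncard < M.ncard :=
          Set.ncard_lt_ncard (ssubset_of_subset_of_ne hCM hCne) (Set.toFinite _)
        omega
      have reachB := ih B hB hBlt
      have reachC := ih C hC hClt
      have hdisj' : C ∩ B = ∅ := by rw [Set.inter_comm]; exact hdisj
      -- Phase 1
      have phase1 : ReachI (fun ρ => PartOn M ρ ∧ Inv G T d M ρ)
          (sngl B ∪ sngl C) (clsPart G B ∪ sngl C) := by
        refine reachB.lift (sngl C) B (fun ρ hρ Q hQ => hρ.1.1 Q hQ) ?_ ?_
        · rintro e ⟨v, hv, rfl⟩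
          exact Set.eq_empty_iff_forall_notMem.2 (by
            rintro x ⟨rfl, hx2⟩
            exact Set.eq_empty_iff_forall_notMem.1 hdisj x ⟨hx2, hv⟩)
        · intro ρ hρ
          constructor
          · have := partOn_union hρ.1 (partOn_sngl (M := C)) hdisj
            rwa [hBC] at this
          · refine inv_lift hρ.2 hρ.1.1 hBM ?_ ?_ ?_
            · rintro e ⟨v, hv, rfl⟩; exact singleton_nonempty v
            · rintro e ⟨v, hv, rfl⟩
              exact Set.eq_empty_iff_forall_notMem.2 (by
                rintro x ⟨rfl, hx2⟩
                exact Set.eq_empty_iff_forall_notMem.1 hdisj x ⟨hx2, hv⟩)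
            · rintro e ⟨v, hv, rfl⟩
              have hvB : v ∉ B := fun hc =>
                Set.eq_empty_iff_forall_notMem.1 hdisj v ⟨hc, hv⟩
              refine ⟨{v}, T.singleton_mem v, by simpa using hCM hv, ?_, subset_rfl,
                ?_, ?_, ?_⟩
              · exact Set.eq_empty_iff_forall_notMem.2 (by rintro x ⟨rfl, hx2⟩; exact hvB hx2)
              · rintro e' (he' | ⟨u, hu, rfl⟩)
                · refine Or.inr (Set.eq_empty_iff_forall_notMem.2 ?_)
                  rintro x ⟨hx1, rfl⟩
                  exact hvB ((hρ.1.1 e' he').2 hx1)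
                · by_cases huv : u = v
                  · subst huv; exact Or.inl subset_rfl
                  · refine Or.inr (Set.eq_empty_iff_forall_notMem.2 ?_)
                    rintro x ⟨rfl, hx2⟩
                    exact huv (by simpa using hx2)
              · intro e' _ hsub
                exact unif_subsingleton (fun a ha b hb => by
                  have := hsub ha; have := hsub hb; simp_all)
              · calc {Q ∈ ρ ∪ sngl C | Q ⊆ {v}}.ncard
                    ≤ ({({v} : Set V)} : Set (Set V)).ncard := by
                      refine Set.ncard_le_ncard ?_ (Set.toFinite _)
                      rintro Q ⟨hQ, hQv⟩
                      have hQne : Q.Nonempty := by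
                        rcases hQ with hQ | ⟨u, hu, rfl⟩
                        · exact (hρ.1.1 Q hQ).1
                        · exact singleton_nonempty u
                      obtain ⟨x, hx⟩ := hQne
                      have hxv : x = v := hQv hx
                      subst hxv
                      have : Q = {x} := Set.Subset.antisymm hQv (by
                        rintro y rfl; exact hx)
                      simp [this]
                  _ ≤ d := by rw [Set.ncard_singleton]; omega
      -- Phase 2
      have phase2 : ReachI (fun ρ => PartOn M ρ ∧ Inv G T d M ρ)
          (sngl C ∪ clsPart G B) (clsPart G C ∪ clsPart G B) := by
        refine reachC.lift (clsPart G B) C (fun ρ hρ Q hQ => hρ.1.1 Q hQ) ?_ ?_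
        · rintro e ⟨v, hv, rfl⟩
          exact Set.eq_empty_iff_forall_notMem.2 (by
            rintro x ⟨hx1, hx2⟩
            exact Set.eq_empty_iff_forall_notMem.1 hdisj x ⟨hx1.1, hx2⟩)
        · intro ρ hρ
          constructor
          · have := partOn_union hρ.1 (partOn_clsPart (G := G) (M := B)) hdisj'
            rwa [Set.union_comm C B, hBC] at this
          · refine inv_lift hρ.2 hρ.1.1 hCM ?_ ?_ ?_
            · rintro e ⟨v, hv, rfl⟩; exact ⟨v, cls_self hv⟩
            · rintro e ⟨v, hv, rfl⟩
              exact Set.eq_empty_iff_forall_notMem.2 (by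
                rintro x ⟨hx1, hx2⟩
                exact Set.eq_empty_iff_forall_notMem.1 hdisj x ⟨hx1.1, hx2⟩)
            · rintro e he
              refine ⟨B, hB, hBM, hdisj, ?_, ?_, ?_, ?_⟩
              · obtain ⟨v, hv, rfl⟩ := he; exact fun x hx => hx.1
              · rintro e' (he' | ⟨u, hu, rfl⟩)
                · refine Or.inr (Set.eq_empty_iff_forall_notMem.2 ?_)
                  rintro x ⟨hx1, hx2⟩
                  exact Set.eq_empty_iff_forall_notMem.1 hdisj x
                    ⟨hx2, (hρ.1.1 e' he').2 hx1⟩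
                · exact Or.inl (fun x hx => hx.1)
              · rintro e' (he' | ⟨u, hu, rfl⟩) hsub
                · exfalso
                  obtain ⟨x, hx⟩ := (hρ.1.1 e' he').1
                  exact Set.eq_empty_iff_forall_notMem.1 hdisj x
                    ⟨hsub hx, (hρ.1.1 e' he').2 hx⟩
                · exact unif_of_subset_cls subset_rfl
              · have : {Q ∈ ρ ∪ clsPart G B | Q ⊆ B} = {Q ∈ clsPart G B | Q ⊆ B} := by
                  apply sep_union_eq_right
                  intro q hq
                  obtain ⟨x, hx⟩ := (hρ.1.1 q hq).1
                  intro hc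
                  exact Set.eq_empty_iff_forall_notMem.1 hdisj x
                    ⟨hc hx, (hρ.1.1 q hq).2 hx⟩
                rw [this]
                calc {Q ∈ clsPart G B | Q ⊆ B}.ncard
                    ≤ (clsPart G B).ncard :=
                      Set.ncard_le_ncard (fun Q hQ => hQ.1) (Set.toFinite _)
                  _ ≤ diversity G B := ncard_clsPart_le
                  _ ≤ d := hT B hB
      -- Phase 3
      have hpart3 : PartOn M (clsPart G B ∪ clsPart G C) := by
        have := partOn_union (partOn_clsPart (G := G) (M := B)) (partOn_clsPart (G := G) (M := C)) hdisj
        rwa [hBC] at this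
      have hcb3 : ∀ Q ∈ clsPart G B ∪ clsPart G C, ∃ v ∈ M, Q ⊆ cls G M v := by
        rintro Q (⟨v, hv, rfl⟩ | ⟨v, hv, rfl⟩)
        · exact ⟨v, hBM hv, cls_mono hBM⟩
        · exact ⟨v, hCM hv, cls_mono hCM⟩
      have hcard3 : (clsPart G B ∪ clsPart G C).ncard ≤ 2 * d := by
        calc (clsPart G B ∪ clsPart G C).ncard
            ≤ (clsPart G B).ncard + (clsPart G C).ncard :=
              Set.ncard_union_le _ _
          _ ≤ d + d := Nat.add_le_add (ncard_clsPart_le.trans (hT B hB))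
              (ncard_clsPart_le.trans (hT C hC))
          _ = 2 * d := by omega
      have phase3 : ReachI (fun ρ => PartOn M ρ ∧ Inv G T d M ρ)
          (clsPart G B ∪ clsPart G C) (clsPart G M) := by
        refine (mergeDown _ _ le_rfl hpart3 hcb3 hcard3).mono ?_
        rintro ρ ⟨h1, h2, h3⟩
        exact ⟨h1, inv_of_classbdd hM h1 h2 h3⟩
      -- compose
      have hsngl : sngl M = sngl B ∪ sngl C := by
        rw [← hBC]; exact Set.image_union _ _ _
      rw [hsngl]
      refine phase1.trans ?_
      rw [Set.union_comm (clsPart G B) (sngl C)]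
      refine phase2.trans ?_
      rw [Set.union_comm (clsPart G C) (clsPart G B)]
      exact phase3

end TWW

namespace TWW
open Set
variable {V : Type} {G : SimpleGraph V} {T : LaminarDecomp V} {d : ℕ}

lemma reach_to_fun {P : Set (Set V) → Prop} {π σ : Set (Set V)} (h : ReachI P π σ) :
    ∃ (k : ℕ) (f : ℕ → Set (Set V)), f 0 = π ∧ (∀ j, k ≤ j → f j = σ) ∧
      (∀ j ≤ k, P (f j)) ∧ ∀ j < k, Step (f j) (f (j + 1)) := by
  induction h with
  | @refl π hp =>
    exact ⟨0, fun _ => π, rfl, fun j _ => rfl, fun j _ => hp, fun j hj => absurd hj (Nat.not_lt_zero j)⟩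
  | @head π ρ σ hp hs _ ih =>
    obtain ⟨k, f, hf0, hfk, hfP, hfS⟩ := ih
    refine ⟨k + 1, fun j => match j with | 0 => π | j' + 1 => f j', rfl, ?_, ?_, ?_⟩
    · intro j hj
      match j, hj with
      | j' + 1, hj => exact hfk j' (by omega)
    · intro j hj
      match j with
      | 0 => exact hp
      | j' + 1 => exact hfP j' (by omega)
    · intro j hj
      match j with
      | 0 => simpa [hf0] using hs
      | j' + 1 => exact hfS j' (by omega)

lemma sngl_univ : sngl (Set.univ : Set V) = {A : Set V | ∃ v : V, A = {v}} := by
  ext A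
  simp [sngl, eq_comm]

lemma clsPart_univ [Nonempty V] : clsPart G (Set.univ : Set V) = {Set.univ} := by
  have hc : ∀ v : V, cls G Set.univ v = Set.univ := by
    intro v
    ext u
    simp only [cls, mem_setOf_eq, Set.mem_univ, true_and, iff_true]
    ext w
    simp [nC]
  ext A
  constructor
  · rintro ⟨v, -, rfl⟩
    simp [hc v]
  · rintro rfl
    exact ⟨Classical.arbitrary V, trivial, (hc _)⟩

lemma partOn_univ_iff {π : Set (Set V)} (h : PartOn Set.univ π) : IsPartitionOn π :=
  ⟨fun A hA => (h.1 A hA).1, fun v => h.2 v trivial⟩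

lemma main_seq [Finite V] [Nonempty V] (G : SimpleGraph V) (T : LaminarDecomp V)
    (d : ℕ) (hd : 1 ≤ d) (hT : ∀ A ∈ T.mem, diversity G A ≤ d) :
    ∃ S : ContractionSeq G (Nat.card V), S.width ≤ 2 * d - 1 := by
  classical
  obtain ⟨k, f, hf0, hfk, hfP, hfS⟩ :=
    reach_to_fun (build hd hT (Set.univ : Set V).ncard Set.univ T.univ_mem le_rfl)
  have hcnt : ∀ j ≤ k, (f j).ncard + j = Nat.card V := by
    intro j
    induction j with
    | zero =>
      intro _
      rw [hf0]
      have : sngl (Set.univ : Set V) = (fun v => ({v} : Set V)) '' Set.univ := rfl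
      rw [this, Set.ncard_image_of_injective _ (fun a b => by simp), Set.ncard_univ]
      omega
    | succ j ihj =>
      intro hj
      have h1 := ihj (by omega)
      have h2 := step_ncard (hfP j (by omega)).1 (hfS j (by omega))
      omega
  have hklast : (f k).ncard = 1 := by
    rw [hfk k le_rfl, clsPart_univ, Set.ncard_singleton]
  have hkcard : k + 1 = Nat.card V := by
    have := hcnt k le_rfl
    omega
  have hcard1 : 1 ≤ Nat.card V := by omega
  refine ⟨⟨f, ?_, ?_, ?_, ?_⟩, ?_⟩
  · intro j hj
    exact partOn_univ_iff (hfP j (by omega)).1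
  · rw [hf0, sngl_univ]
  · have : Nat.card V - 1 = k := by omega
    rw [this, hfk k le_rfl, clsPart_univ]
  · intro j hj
    exact hfS j (by omega)
  · -- width bound
    have hne : Nonempty (Fin (Nat.card V)) := ⟨⟨0, by omega⟩⟩
    apply ciSup_le
    intro j
    have hjk : (j : ℕ) ≤ k := by have := j.isLt; omega
    have hP := hfP j hjk
    have : Nonempty ↥(f (j : ℕ)) := by
      obtain ⟨A, ⟨hA, -⟩, -⟩ := hP.1.2 (Classical.arbitrary V) trivial
      exact ⟨⟨A, hA⟩⟩
    apply ciSup_le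
    intro A
    exact degree_bound hd hP.1 hP.2 A.2

end TWW

namespace TWW
open Set

lemma exists_laminarDecomp (V : Type) [Finite V] [Nonempty V] :
    Nonempty (LaminarDecomp V) := by
  classical
  obtain ⟨n, ⟨e⟩⟩ := Finite.exists_equiv_fin V
  refine ⟨⟨{A | (∃ v : V, A = {v}) ∨ (A.Nonempty ∧ ∃ k : ℕ, A = {v | k ≤ (e v : ℕ)})},
    ?_, ?_, ?_, ?_, ?_⟩⟩
  · exact Or.inr ⟨Set.univ_nonempty, 0, by ext v; simp⟩
  · exact fun v => Or.inl ⟨v, rfl⟩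
  · rintro A (⟨v, rfl⟩ | ⟨hne, -⟩)
    · exact Set.singleton_nonempty v
    · exact hne
  · rintro A (⟨a, rfl⟩ | ⟨-, kA, rfl⟩) B (⟨b, rfl⟩ | ⟨-, kB, rfl⟩)
    · by_cases hab : a = b
      · subst hab; exact Or.inl subset_rfl
      · refine Or.inr (Or.inr ?_)
        ext x; simp only [Set.mem_inter_iff, Set.mem_singleton_iff, Set.mem_empty_iff_false,
          iff_false, not_and]
        rintro rfl h; exact hab h
    · by_cases h : kB ≤ (e a : ℕ)
      · exact Or.inl (by rintro x rfl; exact h)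
      · refine Or.inr (Or.inr ?_)
        ext x; simp only [Set.mem_inter_iff, Set.mem_singleton_iff, Set.mem_setOf_eq,
          Set.mem_empty_iff_false, iff_false, not_and]
        rintro rfl; exact h
    · by_cases h : kA ≤ (e b : ℕ)
      · exact Or.inr (Or.inl (by rintro x rfl; exact h))
      · refine Or.inr (Or.inr ?_)
        ext x; simp only [Set.mem_inter_iff, Set.mem_singleton_iff, Set.mem_setOf_eq,
          Set.mem_empty_iff_false, iff_false]
        rintro ⟨hx, rfl⟩; exact h hx
    · rcases le_total kA kB with h | h
      · exact Or.inr (Or.inl (fun x hx => le_trans h hx))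
      · exact Or.inl (fun x hx => le_trans h hx)
  · rintro A (⟨v, rfl⟩ | ⟨hne, k, rfl⟩) hns
    · exact absurd ⟨v, rfl⟩ hns
    · obtain ⟨x, hx⟩ := hne
      have hkn : k < n := lt_of_le_of_lt hx (e x).isLt
      set v₀ : V := e.symm ⟨k, hkn⟩ with hv₀
      have hev₀ : (e v₀ : ℕ) = k := by simp [hv₀]
      have hv₀A : v₀ ∈ {v | k ≤ (e v : ℕ)} := by simp [hev₀]
      -- A has an element other than v₀
      have h2 : ∃ u, u ∈ {v | k ≤ (e v : ℕ)} ∧ u ≠ v₀ := by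
        by_contra hc
        push_neg at hc
        apply hns
        exact ⟨v₀, Set.eq_singleton_iff_unique_mem.2 ⟨hv₀A, fun u hu => hc u hu⟩⟩
      obtain ⟨u, hu, huv⟩ := h2
      have hu1 : k + 1 ≤ (e u : ℕ) := by
        rcases Nat.lt_or_ge k (e u : ℕ) with h | h
        · omega
        · exfalso
          have : (e u : ℕ) = k := le_antisymm h hu
          apply huv
          have : e u = (⟨k, hkn⟩ : Fin n) := Fin.ext this
          rw [hv₀, ← this]; simp
      refine ⟨{v₀}, Or.inl ⟨v₀, rfl⟩, {v | k + 1 ≤ (e v : ℕ)},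
        Or.inr ⟨⟨u, hu1⟩, k + 1, rfl⟩, ?_, ?_, ?_, ?_⟩
      · intro hc
        apply hns
        exact ⟨v₀, hc.symm⟩
      · intro hc
        have : v₀ ∈ {v | k + 1 ≤ (e v : ℕ)} := hc.symm ▸ hv₀A
        simp only [Set.mem_setOf_eq, hev₀] at this
        omega
      · ext x
        simp only [Set.mem_union, Set.mem_singleton_iff, Set.mem_setOf_eq]
        constructor
        · rintro (rfl | h)
          · exact hv₀A
          · omega
        · intro h
          rcases Nat.lt_or_ge k (e x : ℕ) with h' | h'
          · exact Or.inr (by omega)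
          · left
            have : (e x : ℕ) = k := le_antisymm h' h
            have : e x = (⟨k, hkn⟩ : Fin n) := Fin.ext this
            rw [hv₀, ← this]; simp
      · ext x
        simp only [Set.mem_inter_iff, Set.mem_singleton_iff, Set.mem_setOf_eq,
          Set.mem_empty_iff_false, iff_false]
        rintro ⟨rfl, h⟩
        rw [hev₀] at h
        omega

lemma main_ineq {V : Type} [Finite V] [Nonempty V] (G : SimpleGraph V) :
    twinWidth G ≤ 2 * modularWidth G - 1 := by
  classical
  obtain ⟨T₀⟩ := exists_laminarDecomp V
  have hS : {k | ∃ T : LaminarDecomp V, ∀ A ∈ T.mem, diversity G A ≤ k}.Nonempty := by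
    refine ⟨Nat.card (Set V), T₀, fun A _ => ?_⟩
    calc diversity G A ≤ (Set.univ : Set (Set V)).ncard :=
          Set.ncard_le_ncard (Set.subset_univ _) (Set.toFinite _)
      _ = Nat.card (Set V) := Set.ncard_univ _
  obtain ⟨T, hT⟩ := Nat.sInf_mem hS
  have hd : 1 ≤ modularWidth G := by
    have h1 : diversity G Set.univ ≤ modularWidth G := hT Set.univ T.univ_mem
    have h2 : 1 ≤ diversity G Set.univ := by
      rw [Nat.one_le_iff_ne_zero]
      intro hc
      have := (Set.ncard_eq_zero (Set.toFinite _)).1 hc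
      have hne : ((fun v => {w | G.Adj v w ∧ w ∉ (Set.univ : Set V)}) ''
          (Set.univ : Set V)).Nonempty :=
        Set.Nonempty.image _ Set.univ_nonempty
      rw [this] at hne
      exact Set.not_nonempty_empty hne
    omega
  obtain ⟨S, hSw⟩ := main_seq G T (modularWidth G) hd hT
  calc twinWidth G ≤ S.width := Nat.sInf_le ⟨S, rfl⟩
    _ ≤ 2 * modularWidth G - 1 := hSw

end TWW


/-- `tww(G) ≤ 2·mw(G) − 1` for every finite nonempty graph; consequently, every family of
graphs of bounded modular-width (equivalently, bounded cliquewidth) has bounded twin-width. -/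
theorem twinWidth_le_modularWidth :
    (∀ {V : Type} [Finite V] [Nonempty V] (G : SimpleGraph V),
      twinWidth G ≤ 2 * modularWidth G - 1) ∧
    (∀ (ι : Type) (Vf : ι → Type) (Gf : ∀ i, SimpleGraph (Vf i)),
      (∀ i, Finite (Vf i)) → (∀ i, Nonempty (Vf i)) →
      ∀ b : ℕ, (∀ i, modularWidth (Gf i) ≤ b) → ∃ B : ℕ, ∀ i, twinWidth (Gf i) ≤ B) := by
  constructor
  · intro V _ _ G
    exact TWW.main_ineq G
  · intro ι Vf Gf hfin hne b hb
    refine ⟨2 * b, fun i => ?_⟩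
    haveI := hfin i
    haveI := hne i
    have h1 := TWW.main_ineq (Gf i)
    have h2 := hb i
    omega
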